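/- There exists a universal constant C > 0 such that for every n ≥ 1, d ≥ 1, every polynomial P of degree at most d on {-1,1}^n with E|P(X)|^2 = 1 (X uniform on {-1,1}^n), and every non-empty subset A ⊆ {-1,1}^n with relative size ε = #A / 2^n, one has (1/#A) · Σ_{x∈A} |∇P(x)|^2 ≤ C^d · max{1, (|log ε| / d)^{d-1}}, where |∇P(x)|^2 = Σ_{i=1}^n |∂_i P(x)|^2. -/

import Mathlib

open Classical Finset

/-- Expectation with respect to the uniform measure on the discrete cube `{-1,1}^n`,
encoded as `Fin n → Bool` (`true ↦ 1`, `false ↦ -1`). -/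
noncomputable def cubeE (n : ℕ) (f : (Fin n → Bool) → ℝ) : ℝ :=
  (∑ x : Fin n → Bool, f x) / 2 ^ n

/-- The real value of a coordinate of the cube: `true ↦ 1`, `false ↦ -1`. -/
def cubeSign (b : Bool) : ℝ := if b then 1 else -1

/-- `P` is (the restriction to the cube of) a multilinear polynomial of degree at most `d`:
`P x = ∑_{#S ≤ d} a_S ∏_{i ∈ S} x_i`. -/
def IsPolyDeg (n d : ℕ) (P : (Fin n → Bool) → ℝ) : Prop :=
  ∃ a : Finset (Fin n) → ℝ,
    (∀ S : Finset (Fin n), d < S.card → a S = 0) ∧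
    ∀ x, P x = ∑ S : Finset (Fin n), a S * ∏ i ∈ S, cubeSign (x i)

/-- Probability (uniform measure) of a set of points of the cube. -/
noncomputable def cubePr (n : ℕ) (A : Set (Fin n → Bool)) : ℝ :=
  (∑ x : Fin n → Bool, if x ∈ A then (1 : ℝ) else 0) / 2 ^ n

/-- `a` is an `e^{-r}`-quantile of `P(X)`:
`ℙ(P(X) ≥ a) ≥ e^{-r}` and `ℙ(P(X) ≤ a) ≥ 1 - e^{-r}`. -/
def IsQuantile (n : ℕ) (P : (Fin n → Bool) → ℝ) (r a : ℝ) : Prop :=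
  Real.exp (-r) ≤ cubePr n {x | a ≤ P x} ∧ 1 - Real.exp (-r) ≤ cubePr n {x | P x ≤ a}

/-- Discrete partial derivative: `∂_i f(x) = (f(T_i^1 x) - f(T_i^{-1} x))/2`. -/
noncomputable def discDeriv (n : ℕ) (f : (Fin n → Bool) → ℝ) (i : Fin n)
    (x : Fin n → Bool) : ℝ :=
  (f (Function.update x i true) - f (Function.update x i false)) / 2

/-- Squared norm of the discrete gradient: `|∇f(x)|² = ∑_i |∂_i f(x)|²`. -/
noncomputable def gradSq (n : ℕ) (f : (Fin n → Bool) → ℝ) (x : Fin n → Bool) : ℝ :=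
  ∑ i : Fin n, (discDeriv n f i x) ^ 2

noncomputable def chi (n : ℕ) (S : Finset (Fin n)) (x : Fin n → Bool) : ℝ :=
  ∏ i ∈ S, cubeSign (x i)

lemma cubeSign_sq (b : Bool) : cubeSign b ^ 2 = 1 := by
  cases b <;> simp [cubeSign]

lemma cubeE_mono {n : ℕ} {f g : (Fin n → Bool) → ℝ} (h : ∀ x, f x ≤ g x) :
    cubeE n f ≤ cubeE n g := by
  unfold cubeE
  gcongr
  exact h _

lemma cubeE_nonneg {n : ℕ} {f : (Fin n → Bool) → ℝ} (h : ∀ x, 0 ≤ f x) :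
    0 ≤ cubeE n f := by
  unfold cubeE
  have : (0:ℝ) ≤ ∑ x : Fin n → Bool, f x := Finset.sum_nonneg fun x _ => h x
  positivity

lemma cubeE_add {n : ℕ} (f g : (Fin n → Bool) → ℝ) :
    cubeE n (fun x => f x + g x) = cubeE n f + cubeE n g := by
  unfold cubeE
  rw [Finset.sum_add_distrib, add_div]

lemma cubeE_smul {n : ℕ} (c : ℝ) (f : (Fin n → Bool) → ℝ) :
    cubeE n (fun x => c * f x) = c * cubeE n f := by
  unfold cubeE
  rw [← Finset.mul_sum, mul_div_assoc]

lemma cubeE_const (n : ℕ) (c : ℝ) : cubeE n (fun _ => c) = c := by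
  unfold cubeE
  rw [Finset.sum_const, Finset.card_univ]
  have : Fintype.card (Fin n → Bool) = 2 ^ n := by
    simp [Fintype.card_fun]
  rw [this, nsmul_eq_mul]
  field_simp
  push_cast
  ring

lemma cubeE_sum {n : ℕ} {ι : Type*} (s : Finset ι) (f : ι → (Fin n → Bool) → ℝ) :
    cubeE n (fun x => ∑ i ∈ s, f i x) = ∑ i ∈ s, cubeE n (f i) := by
  unfold cubeE
  rw [Finset.sum_comm, Finset.sum_div]

lemma cubeE_zero_forall {n : ℕ} {f : (Fin n → Bool) → ℝ} (h : ∀ x, 0 ≤ f x)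
    (h2 : cubeE n f ≤ 0) : ∀ x, f x = 0 := by
  have hs : ∑ x : Fin n → Bool, f x = 0 := by
    have h1 : (0:ℝ) ≤ ∑ x : Fin n → Bool, f x := Finset.sum_nonneg fun x _ => h x
    have h3 : (∑ x : Fin n → Bool, f x) / 2 ^ n ≤ 0 := h2
    have h4 := mul_le_mul_of_nonneg_right h3 (le_of_lt (pow_pos (two_pos (α := ℝ)) n))
    rw [div_mul_cancel₀] at h4
    · linarith
    · positivity
  intro x
  exact (Finset.sum_eq_zero_iff_of_nonneg fun y _ => h y).1 hs x (Finset.mem_univ x)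

lemma sum_chi (n : ℕ) (S : Finset (Fin n)) :
    ∑ x : Fin n → Bool, chi n S x = if S = ∅ then (2:ℝ) ^ n else 0 := by
  have key : ∀ x : Fin n → Bool, chi n S x =
      ∏ i : Fin n, (if i ∈ S then cubeSign (x i) else 1) := by
    intro x
    rw [Finset.prod_ite_mem, Finset.univ_inter]
    rfl
  calc ∑ x : Fin n → Bool, chi n S x
      = ∑ x : Fin n → Bool, ∏ i : Fin n, (if i ∈ S then cubeSign (x i) else 1) := by
        exact Finset.sum_congr rfl fun x _ => key x
    _ = ∏ i : Fin n, ∑ b : Bool, (if i ∈ S then cubeSign b else 1) := by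
        rw [Finset.prod_univ_sum, Fintype.piFinset_univ]
    _ = if S = ∅ then (2:ℝ) ^ n else 0 := by
        by_cases hS : S = ∅
        · simp [hS]
        · obtain ⟨i0, hi0⟩ := Finset.nonempty_iff_ne_empty.2 hS
          rw [if_neg hS]
          apply Finset.prod_eq_zero (Finset.mem_univ i0)
          simp [hi0, cubeSign]

lemma chi_mul_chi (n : ℕ) (S T : Finset (Fin n)) (x : Fin n → Bool) :
    chi n S x * chi n T x = chi n (symmDiff S T) x := by
  unfold chi
  rw [← Finset.prod_union_inter]
  have hd : Disjoint (symmDiff S T) (S ∩ T) := by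
    simp [Finset.disjoint_left, Finset.mem_symmDiff]
    tauto
  have hu : S ∪ T = symmDiff S T ∪ (S ∩ T) := by
    ext i; simp [Finset.mem_symmDiff]; tauto
  rw [hu, Finset.prod_union hd, mul_assoc, ← sq]
  have : (∏ i ∈ S ∩ T, cubeSign (x i)) ^ 2 = 1 := by
    rw [← Finset.prod_pow]
    exact Finset.prod_eq_one fun i _ => cubeSign_sq _
  rw [this, mul_one]

lemma cubeE_chi_mul_chi (n : ℕ) (S T : Finset (Fin n)) :
    cubeE n (fun x => chi n S x * chi n T x) = if S = T then 1 else 0 := by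
  unfold cubeE
  have : ∀ x, chi n S x * chi n T x = chi n (symmDiff S T) x := chi_mul_chi n S T
  simp only [this]
  rw [sum_chi]
  have h2 : symmDiff S T = ∅ ↔ S = T := by
    rw [← Finset.bot_eq_empty, symmDiff_eq_bot]
  by_cases h : S = T
  · rw [if_pos (h2.2 h), if_pos h, div_self (by positivity)]
  · rw [if_neg (fun c => h (h2.1 c)), if_neg h, zero_div]

lemma parseval (n : ℕ) (a : Finset (Fin n) → ℝ) :
    cubeE n (fun x => (∑ S : Finset (Fin n), a S * chi n S x) ^ 2)
      = ∑ S : Finset (Fin n), a S ^ 2 := by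
  have expand : ∀ x : Fin n → Bool,
      (∑ S : Finset (Fin n), a S * chi n S x) ^ 2
        = ∑ S : Finset (Fin n), ∑ T : Finset (Fin n),
            (a S * a T) * (chi n S x * chi n T x) := by
    intro x
    rw [sq, Finset.sum_mul_sum]
    apply Finset.sum_congr rfl; intro S _
    apply Finset.sum_congr rfl; intro T _
    ring
  calc cubeE n (fun x => (∑ S : Finset (Fin n), a S * chi n S x) ^ 2)
      = cubeE n (fun x => ∑ S : Finset (Fin n), ∑ T : Finset (Fin n),
          (a S * a T) * (chi n S x * chi n T x)) := by
        exact congrArg _ (funext expand)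
    _ = ∑ S : Finset (Fin n), ∑ T : Finset (Fin n),
          (a S * a T) * cubeE n (fun x => chi n S x * chi n T x) := by
        rw [cubeE_sum]
        apply Finset.sum_congr rfl; intro S _
        rw [cubeE_sum]
        apply Finset.sum_congr rfl; intro T _
        rw [cubeE_smul]
    _ = ∑ S : Finset (Fin n), a S ^ 2 := by
        apply Finset.sum_congr rfl; intro S _
        rw [Finset.sum_eq_single S]
        · rw [cubeE_chi_mul_chi, if_pos rfl, mul_one, sq]
        · intro T _ hT
          rw [cubeE_chi_mul_chi, if_neg (fun c => hT c.symm), mul_zero]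
        · intro h; exact absurd (Finset.mem_univ S) h

-- Nat binomial bound: C(2k,2j) ≤ (2k)^j C(k,j)
lemma choose_two_mul_le (k : ℕ) : ∀ j, j ≤ k →
    Nat.choose (2*k) (2*j) ≤ (2*k)^j * Nat.choose k j := by
  intro j
  induction j with
  | zero => intro _; simp
  | succ j IH =>
    intro hjk
    have hj : j ≤ k := Nat.le_of_succ_le hjk
    have IH' := IH hj
    have h1 : Nat.choose (2*k) (2*j+1) * (2*j+1) = Nat.choose (2*k) (2*j) * (2*k - 2*j) :=
      Nat.choose_succ_right_eq (2*k) (2*j)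
    have h2 : Nat.choose (2*k) (2*j+2) * (2*j+2) = Nat.choose (2*k) (2*j+1) * (2*k - (2*j+1)) :=
      Nat.choose_succ_right_eq (2*k) (2*j+1)
    have h3 : Nat.choose k (j+1) * (j+1) = Nat.choose k j * (k - j) :=
      Nat.choose_succ_right_eq k j
    have key : Nat.choose (2*k) (2*(j+1)) * ((2*j+1)*(2*j+2)) ≤
        ((2*k)^(j+1) * Nat.choose k (j+1)) * ((2*j+1)*(2*j+2)) := by
      have e1 : Nat.choose (2*k) (2*(j+1)) * ((2*j+1)*(2*j+2)) =
          Nat.choose (2*k) (2*j) * ((2*k - 2*j) * (2*k - (2*j+1))) := by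
        have : 2*(j+1) = 2*j+2 := by ring
        rw [this]
        calc Nat.choose (2*k) (2*j+2) * ((2*j+1)*(2*j+2))
            = (Nat.choose (2*k) (2*j+2) * (2*j+2)) * (2*j+1) := by ring
          _ = (Nat.choose (2*k) (2*j+1) * (2*k - (2*j+1))) * (2*j+1) := by rw [h2]
          _ = (Nat.choose (2*k) (2*j+1) * (2*j+1)) * (2*k - (2*j+1)) := by ring
          _ = (Nat.choose (2*k) (2*j) * (2*k - 2*j)) * (2*k - (2*j+1)) := by rw [h1]
          _ = Nat.choose (2*k) (2*j) * ((2*k - 2*j) * (2*k - (2*j+1))) := by ring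
      rw [e1]
      have e2 : ((2*k)^(j+1) * Nat.choose k (j+1)) * ((2*j+1)*(2*j+2)) =
          (2*k)^j * Nat.choose k j * ((2*k) * (2*(2*j+1)) * (k-j)) := by
        calc ((2*k)^(j+1) * Nat.choose k (j+1)) * ((2*j+1)*(2*j+2))
            = (2*k)^j * (2*k) * (2*(2*j+1)) * (Nat.choose k (j+1) * (j+1)) := by ring
          _ = (2*k)^j * (2*k) * (2*(2*j+1)) * (Nat.choose k j * (k-j)) := by rw [h3]
          _ = (2*k)^j * Nat.choose k j * ((2*k) * (2*(2*j+1)) * (k-j)) := by ring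
      rw [e2]
      have hsub : 2*k - 2*j = 2*(k-j) := by omega
      have hfac : (2*k - 2*j) * (2*k - (2*j+1)) ≤ (2*k) * (2*(2*j+1)) * (k-j) := by
        rw [hsub]
        have h5 : 2*k - (2*j+1) ≤ 2*k := Nat.sub_le _ _
        calc 2*(k-j) * (2*k - (2*j+1)) ≤ 2*(k-j) * (2*k * (2*j+1)) := by
              apply Nat.mul_le_mul_left
              calc 2*k - (2*j+1) ≤ 2*k := h5
                _ ≤ 2*k * (2*j+1) := Nat.le_mul_of_pos_right _ (by omega)
          _ = (2*k) * (2*(2*j+1)) * (k-j) := by ring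
      calc Nat.choose (2*k) (2*j) * ((2*k - 2*j) * (2*k - (2*j+1)))
          ≤ ((2*k)^j * Nat.choose k j) * ((2*k - 2*j) * (2*k - (2*j+1))) :=
            Nat.mul_le_mul_right _ IH'
        _ ≤ (2*k)^j * Nat.choose k j * ((2*k) * (2*(2*j+1)) * (k-j)) :=
            Nat.mul_le_mul_left _ hfac
    exact Nat.le_of_mul_le_mul_right key (by positivity)

lemma choose_two_mul_le' (k j : ℕ) (hj : j ≤ k) :
    Nat.choose (2*k) (2*j) ≤ (2*k)^(k-j) * Nat.choose k j := by
  have h1 : Nat.choose (2*k) (2*j) = Nat.choose (2*k) (2*(k-j)) := by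
    have : 2*(k-j) = 2*k - 2*j := by omega
    rw [this, Nat.choose_symm (by omega)]
  rw [h1]
  have := choose_two_mul_le k (k-j) (Nat.sub_le _ _)
  rwa [Nat.choose_symm hj] at this

/-- Hölder-type inequality on the cube via weighted AM-GM. -/
lemma cubeE_holder {n k : ℕ} (hk : 0 < k) {j : ℕ} (hj : j ≤ k)
    {u v : (Fin n → Bool) → ℝ} (hu : ∀ x, 0 ≤ u x) (hv : ∀ x, 0 ≤ v x)
    {A B : ℝ} (hA : 0 ≤ A) (hB : 0 ≤ B)
    (hu2 : cubeE n (fun x => u x ^ k) ≤ A ^ k)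
    (hv2 : cubeE n (fun x => v x ^ k) ≤ B ^ k) :
    cubeE n (fun x => u x ^ (k - j) * v x ^ j) ≤ A ^ (k - j) * B ^ j := by
  rcases eq_or_lt_of_le hA with hA0 | hApos
  · -- A = 0 : u ≡ 0
    have hu0 : ∀ x, u x = 0 := by
      have : cubeE n (fun x => u x ^ k) ≤ 0 := by
        rw [← hA0] at hu2; simpa [zero_pow hk.ne'] using hu2
      intro x
      have := cubeE_zero_forall (fun x => pow_nonneg (hu x) k) this x
      exact pow_eq_zero_iff hk.ne' |>.1 this
    rcases eq_or_lt_of_le hj with hjk | hjlt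
    · subst hjk
      simp only [Nat.sub_self, pow_zero, one_mul]
      exact hv2
    · have hkj : 0 < k - j := Nat.sub_pos_of_lt hjlt
      have : ∀ x, u x ^ (k-j) * v x ^ j = 0 := by
        intro x; rw [hu0 x, zero_pow hkj.ne', zero_mul]
      calc cubeE n (fun x => u x ^ (k - j) * v x ^ j) = cubeE n (fun _ => 0) := by
            exact congrArg _ (funext this)
        _ = 0 := cubeE_const n 0
        _ ≤ A ^ (k-j) * B ^ j := by positivity
  rcases eq_or_lt_of_le hB with hB0 | hBpos
  · have hv0 : ∀ x, v x = 0 := by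
      have : cubeE n (fun x => v x ^ k) ≤ 0 := by
        rw [← hB0] at hv2; simpa [zero_pow hk.ne'] using hv2
      intro x
      have := cubeE_zero_forall (fun x => pow_nonneg (hv x) k) this x
      exact pow_eq_zero_iff hk.ne' |>.1 this
    rcases Nat.eq_zero_or_pos j with hj0 | hjpos
    · subst hj0
      simp only [pow_zero, mul_one, Nat.sub_zero]
      exact hu2
    · have : ∀ x, u x ^ (k-j) * v x ^ j = 0 := by
        intro x; rw [hv0 x, zero_pow hjpos.ne', mul_zero]
      calc cubeE n (fun x => u x ^ (k - j) * v x ^ j) = cubeE n (fun _ => 0) := by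
            exact congrArg _ (funext this)
        _ = 0 := cubeE_const n 0
        _ ≤ A ^ (k-j) * B ^ j := by positivity
  -- main case A, B > 0
  have hkR : (0:ℝ) < (k:ℝ) := by exact_mod_cast hk
  set w₁ : ℝ := ((k:ℝ) - (j:ℝ)) / k with hw₁
  set w₂ : ℝ := (j:ℝ) / k with hw₂
  have hjR : (j:ℝ) ≤ (k:ℝ) := by exact_mod_cast hj
  have hw₁0 : 0 ≤ w₁ := by
    rw [hw₁]
    apply div_nonneg _ (le_of_lt hkR)
    linarith
  have hw₂0 : 0 ≤ w₂ := by positivity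
  have hw : w₁ + w₂ = 1 := by
    rw [hw₁, hw₂]
    field_simp
    ring
  have key : ∀ x, u x ^ (k-j) * v x ^ j ≤
      A^(k-j)*B^j * (w₁ * (u x / A)^k + w₂ * (v x / B)^k) := by
    intro x
    have ht₁ : 0 ≤ u x / A := div_nonneg (hu x) hA
    have ht₂ : 0 ≤ v x / B := div_nonneg (hv x) hB
    have hp₁ : (0:ℝ) ≤ (u x / A)^k := pow_nonneg ht₁ k
    have hp₂ : (0:ℝ) ≤ (v x / B)^k := pow_nonneg ht₂ k
    have e₁ : (((u x / A)^k : ℝ) ^ w₁ : ℝ) = (u x / A)^(k-j) := by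
      rw [← Real.rpow_natCast (u x / A) k, ← Real.rpow_mul ht₁,
        ← Real.rpow_natCast (u x / A) (k-j)]
      congr 1
      rw [hw₁, Nat.cast_sub hj]
      field_simp
    have e₂ : (((v x / B)^k : ℝ) ^ w₂ : ℝ) = (v x / B)^j := by
      rw [← Real.rpow_natCast (v x / B) k, ← Real.rpow_mul ht₂,
        ← Real.rpow_natCast (v x / B) j]
      congr 1
      rw [hw₂]
      field_simp
    have expand : u x ^ (k-j) * v x ^ j = A^(k-j)*B^j * ((u x / A)^(k-j) * (v x / B)^j) := by
      rw [div_pow, div_pow]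
      field_simp
    rw [expand]
    apply mul_le_mul_of_nonneg_left _ (by positivity)
    calc (u x / A)^(k-j) * (v x/B)^j = (((u x/A)^k :ℝ)^w₁ : ℝ) * (((v x/B)^k : ℝ)^w₂ : ℝ) := by
          rw [e₁, e₂]
      _ ≤ w₁ * (u x/A)^k + w₂ * (v x/B)^k :=
          Real.geom_mean_le_arith_mean2_weighted hw₁0 hw₂0 hp₁ hp₂ hw
  have hEu : cubeE n (fun x => (u x / A)^k) ≤ 1 := by
    have e : (fun x => (u x / A)^k) = (fun x => (A^k)⁻¹ * u x ^ k) := by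
      funext x; rw [div_pow]; ring
    rw [e, cubeE_smul]
    calc (A^k)⁻¹ * cubeE n (fun x => u x^k) ≤ (A^k)⁻¹ * A^k :=
          mul_le_mul_of_nonneg_left hu2 (by positivity)
      _ = 1 := by field_simp
  have hEv : cubeE n (fun x => (v x / B)^k) ≤ 1 := by
    have e : (fun x => (v x / B)^k) = (fun x => (B^k)⁻¹ * v x ^ k) := by
      funext x; rw [div_pow]; ring
    rw [e, cubeE_smul]
    calc (B^k)⁻¹ * cubeE n (fun x => v x^k) ≤ (B^k)⁻¹ * B^k :=
          mul_le_mul_of_nonneg_left hv2 (by positivity)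
      _ = 1 := by field_simp
  calc cubeE n (fun x => u x^(k-j)*v x^j)
      ≤ cubeE n (fun x => A^(k-j)*B^j * (w₁ * (u x / A)^k + w₂ * (v x / B)^k)) :=
        cubeE_mono key
    _ = A^(k-j)*B^j * (w₁ * cubeE n (fun x => (u x/A)^k) + w₂ * cubeE n (fun x => (v x/B)^k)) := by
        rw [cubeE_smul (A^(k-j)*B^j) (fun x => w₁ * (u x / A)^k + w₂ * (v x / B)^k),
          cubeE_add (fun x => w₁ * (u x / A)^k) (fun x => w₂ * (v x / B)^k),
          cubeE_smul w₁, cubeE_smul w₂]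
    _ ≤ A^(k-j)*B^j * (w₁ * 1 + w₂ * 1) := by
        apply mul_le_mul_of_nonneg_left _ (by positivity)
        exact add_le_add (mul_le_mul_of_nonneg_left hEu hw₁0)
          (mul_le_mul_of_nonneg_left hEv hw₂0)
    _ = A^(k-j)*B^j := by rw [mul_one, mul_one, hw, mul_one]

/-- reindex: a sum over `range (2k+1)` of a function vanishing on odds. -/
lemma sum_even_reindex (k : ℕ) (t : ℕ → ℝ) (ht : ∀ m, Odd m → t m = 0) :
    ∑ m ∈ Finset.range (2*k+1), t m = ∑ j ∈ Finset.range (k+1), t (2*j) := by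
  have hsub : (Finset.range (k+1)).image (fun j => 2*j) ⊆ Finset.range (2*k+1) := by
    intro m hm
    simp only [Finset.mem_image, Finset.mem_range] at hm ⊢
    obtain ⟨j, hj, rfl⟩ := hm
    omega
  rw [← Finset.sum_subset hsub, Finset.sum_image (fun a _ b _ h => by omega)]
  intro m hm hnot
  apply ht
  simp only [Finset.mem_image, Finset.mem_range] at hm hnot
  rcases Nat.even_or_odd m with he | ho
  · obtain ⟨j, rfl⟩ := he
    exact absurd ⟨j, by omega, by ring⟩ hnot
  · exact ho

/-- Pairing: averaging over flipping coordinate `i`. -/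
lemma sum_update_avg {n : ℕ} (F : (Fin n → Bool) → ℝ) (i : Fin n) :
    ∑ x : Fin n → Bool, F x =
      ((∑ x : Fin n → Bool, F (Function.update x i true)) +
       (∑ x : Fin n → Bool, F (Function.update x i false))) / 2 := by
  have claim : ∀ b : Bool, ∑ x : Fin n → Bool, F (Function.update x i b)
      = 2 * ∑ x ∈ Finset.univ.filter (fun x : Fin n → Bool => x i = b), F x := by
    intro b
    rw [← Finset.sum_filter_add_sum_filter_not Finset.univ (fun x : Fin n → Bool => x i = b)
      (fun x => F (Function.update x i b))]
    have h1 : ∑ x ∈ Finset.univ.filter (fun x : Fin n → Bool => x i = b),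
        F (Function.update x i b)
        = ∑ x ∈ Finset.univ.filter (fun x : Fin n → Bool => x i = b), F x := by
      apply Finset.sum_congr rfl
      intro x hx
      simp only [Finset.mem_filter] at hx
      rw [← hx.2, Function.update_eq_self]
    have h2 : ∑ x ∈ Finset.univ.filter (fun x : Fin n → Bool => ¬ x i = b),
        F (Function.update x i b)
        = ∑ x ∈ Finset.univ.filter (fun x : Fin n → Bool => x i = b), F x := by
      apply Finset.sum_nbij' (fun x => Function.update x i b)
        (fun y => Function.update y i (!b))
      · intro x hx
        simp [Function.update_self]
      · intro y hy
        simp only [Finset.mem_filter, Finset.mem_univ, true_and] at hy ⊢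
        simp [Function.update_self]
      · intro x hx
        simp only [Finset.mem_filter, Finset.mem_univ, true_and] at hx
        have : x i = !b := by
          cases hxx : x i <;> cases b <;> simp_all
        funext j
        by_cases hj : j = i
        · subst hj; simp [Function.update_self, this]
        · simp [Function.update_of_ne hj]
      · intro y hy
        simp only [Finset.mem_filter, Finset.mem_univ, true_and] at hy
        funext j
        by_cases hj : j = i
        · subst hj; simp [Function.update_self, hy]
        · simp [Function.update_of_ne hj]
      · intro x hx
        rfl
    rw [h1, h2]
    ring
  rw [claim true, claim false]
  rw [← Finset.sum_filter_add_sum_filter_not Finset.univ (fun x : Fin n → Bool => x i = true) F]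
  have : (Finset.univ.filter (fun x : Fin n → Bool => ¬ x i = true))
      = (Finset.univ.filter (fun x : Fin n → Bool => x i = false)) := by
    apply Finset.filter_congr
    intro x _
    simp
  rw [this]
  ring

/-- Key inductive step: two-point inequality combined with Hölder. -/
lemma step_bound {n k : ℕ} (hk : 1 ≤ k) (g h : (Fin n → Bool) → ℝ) (i : Fin n)
    (hg : ∀ x b, g (Function.update x i b) = g x)
    (hh : ∀ x b, h (Function.update x i b) = h x)
    {A B : ℝ} (hA : 0 ≤ A) (hB : 0 ≤ B)
    (hgk : cubeE n (fun x => g x ^ (2*k)) ≤ A ^ k)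
    (hhk : cubeE n (fun x => h x ^ (2*k)) ≤ B ^ k) :
    cubeE n (fun x => (g x + cubeSign (x i) * h x)^(2*k)) ≤ (A + 2*k*B)^k := by
  have hkpos : 0 < k := hk
  -- Step 1: average over flipping coordinate i
  have e1 : cubeE n (fun x => (g x + cubeSign (x i) * h x)^(2*k))
      = cubeE n (fun x => ((g x + h x)^(2*k) + (g x - h x)^(2*k))/2) := by
    unfold cubeE
    congr 1
    rw [sum_update_avg (fun x => (g x + cubeSign (x i) * h x)^(2*k)) i]
    have et : ∀ x : Fin n → Bool,
        (g (Function.update x i true) +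
          cubeSign ((Function.update x i true) i) * h (Function.update x i true))^(2*k)
        = (g x + h x)^(2*k) := by
      intro x
      rw [hg, hh, Function.update_self]
      simp [cubeSign]
    have ef : ∀ x : Fin n → Bool,
        (g (Function.update x i false) +
          cubeSign ((Function.update x i false) i) * h (Function.update x i false))^(2*k)
        = (g x - h x)^(2*k) := by
      intro x
      rw [hg, hh, Function.update_self]
      simp only [cubeSign, Bool.false_eq_true, if_false]
      ring_nf
    rw [Finset.sum_congr rfl (fun x _ => et x), Finset.sum_congr rfl (fun x _ => ef x)]
    rw [← Finset.sum_add_distrib, Finset.sum_div]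
  rw [e1]
  -- Step 2: pointwise binomial expansion
  set coef : ℕ → ℝ := fun m => ((2*k).choose m : ℝ) * (1 + (-1:ℝ)^(2*k-m))/2 with hcoef
  have pointwise : ∀ x : Fin n → Bool,
      ((g x + h x)^(2*k) + (g x - h x)^(2*k))/2
        = ∑ m ∈ Finset.range (2*k+1), coef m * (g x ^ m * h x ^ (2*k-m)) := by
    intro x
    have hsub : g x - h x = g x + (- h x) := by ring
    rw [add_pow, hsub, add_pow]
    rw [← Finset.sum_add_distrib, Finset.sum_div]
    apply Finset.sum_congr rfl
    intro m _
    rw [neg_pow (h x) (2*k-m)]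
    rw [hcoef]
    ring
  have e2 : cubeE n (fun x => ((g x + h x)^(2*k) + (g x - h x)^(2*k))/2)
      = ∑ m ∈ Finset.range (2*k+1), coef m * cubeE n (fun x => g x ^ m * h x ^ (2*k-m)) := by
    calc cubeE n (fun x => ((g x + h x)^(2*k) + (g x - h x)^(2*k))/2)
        = cubeE n (fun x => ∑ m ∈ Finset.range (2*k+1),
            coef m * (g x ^ m * h x ^ (2*k-m))) := congrArg _ (funext pointwise)
      _ = ∑ m ∈ Finset.range (2*k+1), cubeE n (fun x => coef m * (g x ^ m * h x ^ (2*k-m))) :=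
          cubeE_sum _ _
      _ = ∑ m ∈ Finset.range (2*k+1), coef m * cubeE n (fun x => g x ^ m * h x ^ (2*k-m)) := by
          exact Finset.sum_congr rfl fun m _ => cubeE_smul _ _
  rw [e2]
  -- Step 3: reindex to even terms
  have hodd : ∀ m, Odd m →
      coef m * cubeE n (fun x => g x ^ m * h x ^ (2*k-m)) = 0 := by
    intro m hm
    rcases le_or_gt m (2*k) with hle | hgt
    · have : Odd (2*k - m) := by
        rcases hm with ⟨r, hr⟩
        exact ⟨k - r - 1, by omega⟩
      have : coef m = 0 := by
        rw [hcoef]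
        simp [Odd.neg_one_pow this]
      rw [this, zero_mul]
    · have : (2*k).choose m = 0 := Nat.choose_eq_zero_of_lt hgt
      rw [hcoef]
      simp [this]
  rw [sum_even_reindex k _ hodd]
  -- Step 4: bound each even term via Hölder
  have term_bound : ∀ j ∈ Finset.range (k+1),
      coef (2*j) * cubeE n (fun x => g x ^ (2*j) * h x ^ (2*k-2*j))
        ≤ ((k.choose j : ℝ)) * (A^j * (2*k*B)^(k-j)) := by
    intro j hj
    have hjk : j ≤ k := by simpa [Nat.lt_succ_iff] using Finset.mem_range.1 hj
    have hcj : coef (2*j) = ((2*k).choose (2*j) : ℝ) := by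
      simp only [hcoef]
      have : Even (2*k - 2*j) := ⟨k - j, by omega⟩
      rw [Even.neg_one_pow this]
      ring
    have hE : cubeE n (fun x => g x ^ (2*j) * h x ^ (2*k-2*j)) ≤ A^j * B^(k-j) := by
      have ee : (fun x => g x ^ (2*j) * h x ^ (2*k-2*j))
          = (fun x => (h x ^ 2) ^ (k-j) * (g x ^ 2) ^ j) := by
        funext x
        rw [← pow_mul, ← pow_mul]
        have h1 : 2*k - 2*j = 2*(k-j) := by omega
        rw [h1, mul_comm]
      rw [ee]
      have := cubeE_holder hkpos hjk (u := fun x => h x ^ 2) (v := fun x => g x ^ 2)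
        (fun x => sq_nonneg _) (fun x => sq_nonneg _) hB hA
        (by
          have : (fun x => (h x ^ 2) ^ k) = (fun x => h x ^ (2*k)) := by
            funext x; rw [← pow_mul]
          rw [this]; exact hhk)
        (by
          have : (fun x => (g x ^ 2) ^ k) = (fun x => g x ^ (2*k)) := by
            funext x; rw [← pow_mul]
          rw [this]; exact hgk)
      calc cubeE n (fun x => (h x ^ 2) ^ (k-j) * (g x ^ 2) ^ j) ≤ B^(k-j) * A^j := this
        _ = A^j * B^(k-j) := by ring
    have hchoose : ((2*k).choose (2*j) : ℝ) ≤ ((2*k)^(k-j) : ℝ) * (k.choose j : ℝ) := by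
      have := choose_two_mul_le' k j hjk
      exact_mod_cast this
    have hEnn : (0:ℝ) ≤ cubeE n (fun x => g x ^ (2*j) * h x ^ (2*k-2*j)) := by
      apply cubeE_nonneg
      intro x
      have h1 : g x ^ (2*j) = (g x ^ 2)^j := by rw [← pow_mul]
      have h2 : h x ^ (2*k-2*j) = (h x ^ 2)^(k-j) := by
        rw [← pow_mul]; congr 1; omega
      rw [h1, h2]
      positivity
    calc coef (2*j) * cubeE n (fun x => g x ^ (2*j) * h x ^ (2*k-2*j))
        ≤ coef (2*j) * (A^j * B^(k-j)) := by
          rw [hcj]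
          exact mul_le_mul_of_nonneg_left hE (by positivity)
      _ = ((2*k).choose (2*j) : ℝ) * (A^j * B^(k-j)) := by rw [hcj]
      _ ≤ ((2*k)^(k-j) : ℝ) * (k.choose j : ℝ) * (A^j * B^(k-j)) := by
          apply mul_le_mul_of_nonneg_right hchoose (by positivity)
      _ = ((k.choose j : ℝ)) * (A^j * (2*k*B)^(k-j)) := by
          rw [mul_pow]
          push_cast
          ring
  calc ∑ j ∈ Finset.range (k+1), coef (2*j) * cubeE n (fun x => g x ^ (2*j) * h x ^ (2*k-2*j))
      ≤ ∑ j ∈ Finset.range (k+1), ((k.choose j : ℝ)) * (A^j * (2*k*B)^(k-j)) :=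
        Finset.sum_le_sum term_bound
    _ = (A + 2*k*B)^k := by
        rw [add_pow]
        apply Finset.sum_congr rfl
        intro j _
        ring

lemma sum_split_insert {n : ℕ} (i : Fin n) (F : Finset (Fin n) → ℝ) :
    ∑ S : Finset (Fin n), F S
      = (∑ S ∈ Finset.univ.filter (fun S : Finset (Fin n) => i ∉ S), F S)
        + ∑ S ∈ Finset.univ.filter (fun S : Finset (Fin n) => i ∉ S), F (insert i S) := by
  rw [← Finset.sum_filter_add_sum_filter_not Finset.univ (fun S : Finset (Fin n) => i ∉ S) F]
  congr 1
  apply Finset.sum_nbij' (fun S => Finset.erase S i) (fun S => insert i S)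
  · intro S hS
    simp only [Finset.mem_filter, Finset.mem_univ, true_and] at hS ⊢
    exact Finset.notMem_erase i S
  · intro S hS
    simp only [Finset.mem_filter, Finset.mem_univ, true_and, not_not] at hS ⊢
    exact Finset.mem_insert_self i S
  · intro S hS
    simp only [Finset.mem_filter, Finset.mem_univ, true_and, not_not] at hS
    exact Finset.insert_erase hS
  · intro S hS
    simp only [Finset.mem_filter, Finset.mem_univ, true_and] at hS
    exact Finset.erase_insert hS
  · intro S hS
    simp only [Finset.mem_filter, Finset.mem_univ, true_and, not_not] at hS
    rw [Finset.insert_erase hS]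

/-- Hypercontractivity for even moments on the discrete cube. -/
lemma hyper {n k : ℕ} (hk : 1 ≤ k) (J : Finset (Fin n)) :
    ∀ a : Finset (Fin n) → ℝ, (∀ S, ¬ S ⊆ J → a S = 0) →
    cubeE n (fun x => (∑ S : Finset (Fin n), a S * chi n S x) ^ (2*k))
      ≤ (∑ S : Finset (Fin n), (2*(k:ℝ))^S.card * a S ^ 2) ^ k := by
  induction J using Finset.induction_on with
  | empty =>
    intro a ha
    have ha' : ∀ S : Finset (Fin n), S ≠ ∅ → a S = 0 := by
      intro S hS
      exact ha S (by simpa [Finset.subset_empty] using hS)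
    have e : ∀ x, ∑ S : Finset (Fin n), a S * chi n S x = a ∅ := by
      intro x
      rw [Finset.sum_eq_single ∅]
      · simp [chi]
      · intro T _ hT
        rw [ha' T hT, zero_mul]
      · intro hemp
        exact absurd (Finset.mem_univ _) hemp
    have e2 : (fun x : Fin n → Bool => (∑ S : Finset (Fin n), a S * chi n S x) ^ (2*k))
        = fun _ => (a ∅) ^ (2*k) := by
      funext x; rw [e x]
    rw [e2, cubeE_const]
    have e3 : ∑ S : Finset (Fin n), (2*(k:ℝ))^S.card * a S ^ 2 = a ∅ ^ 2 := by
      rw [Finset.sum_eq_single ∅]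
      · simp
      · intro T _ hT
        rw [ha' T hT]
        ring
      · intro hemp
        exact absurd (Finset.mem_univ _) hemp
    rw [e3, ← pow_mul]
  | @insert i J hiJ IH =>
    intro a ha
    set b : Finset (Fin n) → ℝ := fun S => if i ∈ S then 0 else a S with hb_def
    set c : Finset (Fin n) → ℝ := fun S => if i ∈ S then 0 else a (insert i S) with hc_def
    have hb : ∀ S, ¬ S ⊆ J → b S = 0 := by
      intro S hS
      simp only [hb_def]
      by_cases hiS : i ∈ S
      · rw [if_pos hiS]
      · rw [if_neg hiS]
        apply ha
        intro hsub
        exact hS (fun j hj => by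
          rcases Finset.mem_insert.1 (hsub hj) with h1 | h2
          · exact absurd (h1 ▸ hj) hiS
          · exact h2)
    have hc : ∀ S, ¬ S ⊆ J → c S = 0 := by
      intro S hS
      simp only [hc_def]
      by_cases hiS : i ∈ S
      · rw [if_pos hiS]
      · rw [if_neg hiS]
        apply ha
        intro hsub
        apply hS
        intro j hj
        have : j ∈ insert i J := hsub (Finset.mem_insert_of_mem hj)
        rcases Finset.mem_insert.1 this with h1 | h2
        · exact absurd (h1 ▸ hj) hiS
        · exact h2
    -- decomposition f = g + sign * h
    have hfx : ∀ x : Fin n → Bool, ∑ S : Finset (Fin n), a S * chi n S x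
        = (∑ S : Finset (Fin n), b S * chi n S x)
          + cubeSign (x i) * (∑ S : Finset (Fin n), c S * chi n S x) := by
      intro x
      rw [sum_split_insert i (fun S => a S * chi n S x)]
      have eg : ∑ S : Finset (Fin n), b S * chi n S x
          = ∑ S ∈ Finset.univ.filter (fun S : Finset (Fin n) => i ∉ S), a S * chi n S x := by
        rw [← Finset.sum_filter_add_sum_filter_not Finset.univ
          (fun S : Finset (Fin n) => i ∉ S) (fun S => b S * chi n S x)]
        have z : ∑ S ∈ Finset.univ.filter (fun S : Finset (Fin n) => ¬ i ∉ S),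
            b S * chi n S x = 0 := by
          apply Finset.sum_eq_zero
          intro S hS
          simp only [Finset.mem_filter, Finset.mem_univ, true_and, not_not] at hS
          simp only [hb_def]
          rw [if_pos hS, zero_mul]
        rw [z, add_zero]
        apply Finset.sum_congr rfl
        intro S hS
        simp only [Finset.mem_filter, Finset.mem_univ, true_and] at hS
        simp only [hb_def]
        rw [if_neg hS]
      have eh : cubeSign (x i) * (∑ S : Finset (Fin n), c S * chi n S x)
          = ∑ S ∈ Finset.univ.filter (fun S : Finset (Fin n) => i ∉ S),
              a (insert i S) * chi n (insert i S) x := by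
        have eh1 : ∑ S : Finset (Fin n), c S * chi n S x
            = ∑ S ∈ Finset.univ.filter (fun S : Finset (Fin n) => i ∉ S),
                a (insert i S) * chi n S x := by
          rw [← Finset.sum_filter_add_sum_filter_not Finset.univ
            (fun S : Finset (Fin n) => i ∉ S) (fun S => c S * chi n S x)]
          have z : ∑ S ∈ Finset.univ.filter (fun S : Finset (Fin n) => ¬ i ∉ S),
              c S * chi n S x = 0 := by
            apply Finset.sum_eq_zero
            intro S hS
            simp only [Finset.mem_filter, Finset.mem_univ, true_and, not_not] at hS
            simp only [hc_def]
            rw [if_pos hS, zero_mul]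
          rw [z, add_zero]
          apply Finset.sum_congr rfl
          intro S hS
          simp only [Finset.mem_filter, Finset.mem_univ, true_and] at hS
          simp only [hc_def]
          rw [if_neg hS]
        rw [eh1, Finset.mul_sum]
        apply Finset.sum_congr rfl
        intro S hS
        simp only [Finset.mem_filter, Finset.mem_univ, true_and] at hS
        unfold chi
        rw [Finset.prod_insert hS]
        ring
      rw [eg, eh]
    -- invariance under flipping coordinate i
    have hginv : ∀ (x : Fin n → Bool) (v : Bool),
        (∑ S : Finset (Fin n), b S * chi n S (Function.update x i v))
          = ∑ S : Finset (Fin n), b S * chi n S x := by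
      intro x v
      apply Finset.sum_congr rfl
      intro S _
      by_cases hiS : i ∈ S
      · simp only [hb_def]; rw [if_pos hiS, zero_mul, zero_mul]
      · congr 1
        unfold chi
        apply Finset.prod_congr rfl
        intro j hj
        rw [Function.update_of_ne (fun hji => hiS (by rwa [hji] at hj))]
    have hhinv : ∀ (x : Fin n → Bool) (v : Bool),
        (∑ S : Finset (Fin n), c S * chi n S (Function.update x i v))
          = ∑ S : Finset (Fin n), c S * chi n S x := by
      intro x v
      apply Finset.sum_congr rfl
      intro S _
      by_cases hiS : i ∈ S
      · simp only [hc_def]; rw [if_pos hiS, zero_mul, zero_mul]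
      · congr 1
        unfold chi
        apply Finset.prod_congr rfl
        intro j hj
        rw [Function.update_of_ne (fun hji => hiS (by rwa [hji] at hj))]
    have hgk := IH b hb
    have hhk := IH c hc
    have hWb : (0:ℝ) ≤ ∑ S : Finset (Fin n), (2*(k:ℝ))^S.card * b S ^ 2 := by
      apply Finset.sum_nonneg
      intro S _
      have : (0:ℝ) ≤ (2*(k:ℝ)) := by positivity
      positivity
    have hWc : (0:ℝ) ≤ ∑ S : Finset (Fin n), (2*(k:ℝ))^S.card * c S ^ 2 := by
      apply Finset.sum_nonneg
      intro S _
      have : (0:ℝ) ≤ (2*(k:ℝ)) := by positivity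
      positivity
    have main := step_bound hk (fun x => ∑ S : Finset (Fin n), b S * chi n S x)
      (fun x => ∑ S : Finset (Fin n), c S * chi n S x) i
      (fun x v => hginv x v) (fun x v => hhinv x v) hWb hWc hgk hhk
    have efun : (fun x : Fin n → Bool =>
        (∑ S : Finset (Fin n), a S * chi n S x) ^ (2*k))
        = fun x => ((∑ S : Finset (Fin n), b S * chi n S x)
            + cubeSign (x i) * (∑ S : Finset (Fin n), c S * chi n S x)) ^ (2*k) := by
      funext x; rw [hfx x]
    rw [efun]
    apply le_trans main
    apply le_of_eq
    congr 1
    -- Wb + 2k * Wc = total weighted sum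
    rw [sum_split_insert i (fun S => (2*(k:ℝ))^S.card * a S ^ 2)]
    have eWb : ∑ S : Finset (Fin n), (2*(k:ℝ))^S.card * b S ^ 2
        = ∑ S ∈ Finset.univ.filter (fun S : Finset (Fin n) => i ∉ S),
            (2*(k:ℝ))^S.card * a S ^ 2 := by
      rw [← Finset.sum_filter_add_sum_filter_not Finset.univ
        (fun S : Finset (Fin n) => i ∉ S) (fun S => (2*(k:ℝ))^S.card * b S ^ 2)]
      have z : ∑ S ∈ Finset.univ.filter (fun S : Finset (Fin n) => ¬ i ∉ S),
          (2*(k:ℝ))^S.card * b S ^ 2 = 0 := by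
        apply Finset.sum_eq_zero
        intro S hS
        simp only [Finset.mem_filter, Finset.mem_univ, true_and, not_not] at hS
        simp only [hb_def]
        rw [if_pos hS]
        ring
      rw [z, add_zero]
      apply Finset.sum_congr rfl
      intro S hS
      simp only [Finset.mem_filter, Finset.mem_univ, true_and] at hS
      simp only [hb_def]
      rw [if_neg hS]
    have eWc : 2*(k:ℝ) * ∑ S : Finset (Fin n), (2*(k:ℝ))^S.card * c S ^ 2
        = ∑ S ∈ Finset.univ.filter (fun S : Finset (Fin n) => i ∉ S),
            (2*(k:ℝ))^(insert i S).card * a (insert i S) ^ 2 := by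
      have eh1 : ∑ S : Finset (Fin n), (2*(k:ℝ))^S.card * c S ^ 2
          = ∑ S ∈ Finset.univ.filter (fun S : Finset (Fin n) => i ∉ S),
              (2*(k:ℝ))^S.card * a (insert i S) ^ 2 := by
        rw [← Finset.sum_filter_add_sum_filter_not Finset.univ
          (fun S : Finset (Fin n) => i ∉ S) (fun S => (2*(k:ℝ))^S.card * c S ^ 2)]
        have z : ∑ S ∈ Finset.univ.filter (fun S : Finset (Fin n) => ¬ i ∉ S),
            (2*(k:ℝ))^S.card * c S ^ 2 = 0 := by
          apply Finset.sum_eq_zero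
          intro S hS
          simp only [Finset.mem_filter, Finset.mem_univ, true_and, not_not] at hS
          simp only [hc_def]
          rw [if_pos hS]
          ring
        rw [z, add_zero]
        apply Finset.sum_congr rfl
        intro S hS
        simp only [Finset.mem_filter, Finset.mem_univ, true_and] at hS
        simp only [hc_def]
        rw [if_neg hS]
      rw [eh1, Finset.mul_sum]
      apply Finset.sum_congr rfl
      intro S hS
      simp only [Finset.mem_filter, Finset.mem_univ, true_and] at hS
      rw [Finset.card_insert_of_notMem hS, pow_succ]
      ring
    rw [eWb, eWc]

/-- Hypercontractivity with degree bound. -/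
lemma hyper' {n k d : ℕ} (hk : 1 ≤ k) (a : Finset (Fin n) → ℝ)
    (ha : ∀ S : Finset (Fin n), d < S.card → a S = 0) :
    cubeE n (fun x => (∑ S : Finset (Fin n), a S * chi n S x) ^ (2*k))
      ≤ ((2*(k:ℝ))^d * ∑ S : Finset (Fin n), a S ^ 2) ^ k := by
  apply le_trans (hyper hk Finset.univ a (fun S hS => absurd (Finset.subset_univ S) hS))
  apply pow_le_pow_left₀
  · apply Finset.sum_nonneg
    intro S _
    have : (0:ℝ) ≤ (2*(k:ℝ)) := by positivity
    positivity
  rw [Finset.mul_sum]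
  apply Finset.sum_le_sum
  intro S _
  by_cases hcard : S.card ≤ d
  · apply mul_le_mul_of_nonneg_right _ (sq_nonneg _)
    apply pow_le_pow_right₀ _ hcard
    have : (1:ℝ) ≤ (k:ℝ) := by exact_mod_cast hk
    linarith
  · rw [ha S (by omega)]
    simp

/-- Minkowski-type: binomial + Hölder. -/
lemma cubeE_add_pow {n k : ℕ} (hk : 0 < k) {u v : (Fin n → Bool) → ℝ}
    (hu : ∀ x, 0 ≤ u x) (hv : ∀ x, 0 ≤ v x) {A B : ℝ} (hA : 0 ≤ A) (hB : 0 ≤ B)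
    (hu2 : cubeE n (fun x => u x ^ k) ≤ A ^ k)
    (hv2 : cubeE n (fun x => v x ^ k) ≤ B ^ k) :
    cubeE n (fun x => (u x + v x) ^ k) ≤ (A + B) ^ k := by
  have e : (fun x => (u x + v x) ^ k)
      = fun x => ∑ m ∈ Finset.range (k+1), ((k.choose m : ℝ)) * (u x ^ m * v x ^ (k-m)) := by
    funext x
    rw [add_pow]
    apply Finset.sum_congr rfl
    intro m _
    ring
  rw [e, cubeE_sum]
  have term : ∀ m ∈ Finset.range (k+1),
      cubeE n (fun x => ((k.choose m : ℝ)) * (u x ^ m * v x ^ (k-m)))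
        ≤ ((k.choose m : ℝ)) * (A ^ m * B ^ (k-m)) := by
    intro m hm
    have hmk : m ≤ k := by simpa [Nat.lt_succ_iff] using Finset.mem_range.1 hm
    rw [cubeE_smul]
    apply mul_le_mul_of_nonneg_left _ (by positivity)
    have hj : k - m ≤ k := Nat.sub_le _ _
    have hmm : k - (k - m) = m := by omega
    have := cubeE_holder hk hj hu hv hA hB hu2 hv2
    rw [hmm] at this
    exact this
  apply le_trans (Finset.sum_le_sum term)
  rw [add_pow]
  apply le_of_eq
  apply Finset.sum_congr rfl
  intro m _
  ring

/-- Minkowski over a finite sum of nonnegative functions. -/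
lemma cubeE_finsum_pow {n k : ℕ} (hk : 0 < k) {ι : Type*} (s : Finset ι)
    (u : ι → (Fin n → Bool) → ℝ) (A : ι → ℝ)
    (hu : ∀ i, ∀ x, 0 ≤ u i x) (hA : ∀ i, 0 ≤ A i)
    (h : ∀ i ∈ s, cubeE n (fun x => u i x ^ k) ≤ A i ^ k) :
    cubeE n (fun x => (∑ i ∈ s, u i x) ^ k) ≤ (∑ i ∈ s, A i) ^ k := by
  induction s using Finset.induction_on with
  | empty =>
    simp only [Finset.sum_empty]
    rw [show (fun _ : Fin n → Bool => (0:ℝ) ^ k) = fun _ => (0:ℝ) by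
      funext x; rw [zero_pow hk.ne']]
    rw [cubeE_const]
    rw [zero_pow hk.ne']
  | @insert a s has IH =>
    have h' : ∀ i ∈ s, cubeE n (fun x => u i x ^ k) ≤ A i ^ k := fun i hi =>
      h i (Finset.mem_insert_of_mem hi)
    have e : (fun x => (∑ i ∈ insert a s, u i x) ^ k)
        = fun x => (u a x + ∑ i ∈ s, u i x) ^ k := by
      funext x
      rw [Finset.sum_insert has]
    rw [e, Finset.sum_insert has]
    apply cubeE_add_pow hk (hu a) (fun x => Finset.sum_nonneg fun i _ => hu i x)
      (hA a) (Finset.sum_nonneg fun i _ => hA i) (h a (Finset.mem_insert_self a s)) (IH h')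

/-- Fourier expansion of the discrete derivative. -/
lemma discDeriv_eq {n : ℕ} (a : Finset (Fin n) → ℝ) (i : Fin n) :
    discDeriv n (fun x => ∑ S : Finset (Fin n), a S * chi n S x) i
      = fun x => ∑ S : Finset (Fin n), (if i ∈ S then 0 else a (insert i S)) * chi n S x := by
  funext x
  unfold discDeriv
  have expand : (∑ S : Finset (Fin n), a S * chi n S (Function.update x i true))
      - (∑ S : Finset (Fin n), a S * chi n S (Function.update x i false))
      = ∑ S : Finset (Fin n),
          a S * ((chi n S (Function.update x i true) - chi n S (Function.update x i false))) := by
    rw [← Finset.sum_sub_distrib]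
    apply Finset.sum_congr rfl
    intro S _
    ring
  rw [expand, Finset.sum_div]
  have chi_upd : ∀ (S : Finset (Fin n)), i ∉ S → ∀ b,
      chi n S (Function.update x i b) = chi n S x := by
    intro S hiS b
    unfold chi
    apply Finset.prod_congr rfl
    intro j hj
    rw [Function.update_of_ne (fun hji => hiS (by rwa [hji] at hj))]
  have lhs_eq : ∑ S : Finset (Fin n),
      a S * ((chi n S (Function.update x i true) - chi n S (Function.update x i false))) / 2
      = ∑ S ∈ Finset.univ.filter (fun S : Finset (Fin n) => i ∉ S),
          a (insert i S) * chi n S x := by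
    rw [sum_split_insert i (fun S =>
      a S * ((chi n S (Function.update x i true) - chi n S (Function.update x i false))) / 2)]
    have z : ∑ S ∈ Finset.univ.filter (fun S : Finset (Fin n) => i ∉ S),
        a S * ((chi n S (Function.update x i true) - chi n S (Function.update x i false))) / 2
        = 0 := by
      apply Finset.sum_eq_zero
      intro S hS
      simp only [Finset.mem_filter, Finset.mem_univ, true_and] at hS
      rw [chi_upd S hS true, chi_upd S hS false]
      ring
    rw [z, zero_add]
    apply Finset.sum_congr rfl
    intro S hS
    simp only [Finset.mem_filter, Finset.mem_univ, true_and] at hS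
    have hins : ∀ b, chi n (insert i S) (Function.update x i b)
        = cubeSign b * chi n S x := by
      intro b
      unfold chi
      rw [Finset.prod_insert hS, Function.update_self]
      rw [show (∏ j ∈ S, cubeSign (Function.update x i b j)) = ∏ j ∈ S, cubeSign (x j) from
        Finset.prod_congr rfl fun j hj =>
          by rw [Function.update_of_ne (fun hji => hS (by rwa [hji] at hj))]]
    rw [hins true, hins false]
    simp only [cubeSign, if_pos, Bool.false_eq_true, if_false]
    ring
  rw [lhs_eq]
  rw [sum_split_insert i (fun S => (if i ∈ S then 0 else a (insert i S)) * chi n S x)]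
  have z2 : ∑ S ∈ Finset.univ.filter (fun S : Finset (Fin n) => i ∉ S),
      (if i ∈ insert i S then 0 else a (insert i (insert i S))) * chi n (insert i S) x = 0 := by
    apply Finset.sum_eq_zero
    intro S hS
    rw [if_pos (Finset.mem_insert_self i S), zero_mul]
  rw [z2, add_zero]
  apply Finset.sum_congr rfl
  intro S hS
  simp only [Finset.mem_filter, Finset.mem_univ, true_and] at hS
  rw [if_neg hS]

lemma deriv_coeff_sum {n d : ℕ} (a : Finset (Fin n) → ℝ)
    (ha : ∀ S : Finset (Fin n), d < S.card → a S = 0) :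
    ∑ i : Fin n, ∑ S : Finset (Fin n), (if i ∈ S then 0 else a (insert i S)) ^ 2
      ≤ (d : ℝ) * ∑ S : Finset (Fin n), a S ^ 2 := by
  have per_i : ∀ i : Fin n,
      ∑ S : Finset (Fin n), (if i ∈ S then 0 else a (insert i S)) ^ 2
        = ∑ S : Finset (Fin n), (if i ∈ S then a S ^ 2 else 0) := by
    intro i
    rw [sum_split_insert i (fun S => (if i ∈ S then 0 else a (insert i S)) ^ 2),
        sum_split_insert i (fun S => (if i ∈ S then a S ^ 2 else 0))]
    have e1 : ∀ S ∈ Finset.univ.filter (fun S : Finset (Fin n) => i ∉ S),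
        (if i ∈ S then (0:ℝ) else a (insert i S)) ^ 2 = a (insert i S) ^ 2 := by
      intro S hS
      simp only [Finset.mem_filter, Finset.mem_univ, true_and] at hS
      rw [if_neg hS]
    have e2 : ∀ S ∈ Finset.univ.filter (fun S : Finset (Fin n) => i ∉ S),
        (if i ∈ insert i S then (0:ℝ) else a (insert i (insert i S))) ^ 2 = 0 := by
      intro S _
      rw [if_pos (Finset.mem_insert_self i S)]
      ring
    have e3 : ∀ S ∈ Finset.univ.filter (fun S : Finset (Fin n) => i ∉ S),
        (if i ∈ S then a S ^ 2 else (0:ℝ)) = 0 := by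
      intro S hS
      simp only [Finset.mem_filter, Finset.mem_univ, true_and] at hS
      rw [if_neg hS]
    have e4 : ∀ S ∈ Finset.univ.filter (fun S : Finset (Fin n) => i ∉ S),
        (if i ∈ insert i S then a (insert i S) ^ 2 else (0:ℝ)) = a (insert i S) ^ 2 := by
      intro S _
      rw [if_pos (Finset.mem_insert_self i S)]
    rw [Finset.sum_congr rfl e1, Finset.sum_congr rfl e2,
        Finset.sum_congr rfl e3, Finset.sum_congr rfl e4]
    ring
  calc ∑ i : Fin n, ∑ S : Finset (Fin n), (if i ∈ S then 0 else a (insert i S)) ^ 2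
      = ∑ i : Fin n, ∑ S : Finset (Fin n), (if i ∈ S then a S ^ 2 else 0) :=
        Finset.sum_congr rfl fun i _ => per_i i
    _ = ∑ S : Finset (Fin n), ∑ i : Fin n, (if i ∈ S then a S ^ 2 else 0) :=
        Finset.sum_comm
    _ = ∑ S : Finset (Fin n), (S.card : ℝ) * a S ^ 2 := by
        apply Finset.sum_congr rfl
        intro S _
        rw [Finset.sum_ite_mem, Finset.univ_inter, Finset.sum_const, nsmul_eq_mul]
    _ ≤ ∑ S : Finset (Fin n), (d:ℝ) * a S ^ 2 := by
        apply Finset.sum_le_sum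
        intro S _
        by_cases hcard : S.card ≤ d
        · apply mul_le_mul_of_nonneg_right _ (sq_nonneg _)
          exact_mod_cast hcard
        · rw [ha S (by omega)]
          simp
    _ = (d:ℝ) * ∑ S : Finset (Fin n), a S ^ 2 := by rw [Finset.mul_sum]

lemma final_const (d : ℕ) (hd : 1 ≤ d) (z : ℝ) (hz : 0 ≤ z) (kk : ℝ) (hkk : 0 ≤ kk)
    (hk4 : kk ≤ 4 * max 1 z) :
    Real.exp d * (kk^(d-1) * d) ≤ (8 * Real.exp 1)^d * max 1 (z^(d-1)) := by
  have hmax0 : (0:ℝ) ≤ max 1 z := le_trans zero_le_one (le_max_left _ _)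
  have h1 : kk^(d-1) ≤ 4^(d-1) * (max 1 z)^(d-1) := by
    rw [← mul_pow]
    exact pow_le_pow_left₀ hkk hk4 _
  have hmaxpow : (max 1 z)^(d-1) = max 1 (z^(d-1)) := by
    rcases le_total z 1 with hle | hge
    · rw [max_eq_left hle, one_pow, max_eq_left (pow_le_one₀ hz hle)]
    · rw [max_eq_right hge, max_eq_right (one_le_pow₀ hge)]
  have hd2 : (d:ℝ) ≤ 2^d := by exact_mod_cast le_of_lt (Nat.lt_two_pow_self (n := d))
  have h4 : (4:ℝ)^(d-1) ≤ 4^d := pow_le_pow_right₀ (by norm_num) (Nat.sub_le d 1)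
  have hX1 : (1:ℝ) ≤ max 1 (z^(d-1)) := le_max_left _ _
  have hX0 : (0:ℝ) ≤ max 1 (z^(d-1)) := le_trans zero_le_one hX1
  have hexp : (8 * Real.exp 1)^d = 8^d * Real.exp d := by
    rw [mul_pow, Real.exp_one_pow]
  rw [hexp]
  have h8 : (8:ℝ)^d = 4^d * 2^d := by rw [← mul_pow]; norm_num
  have hE : (0:ℝ) < Real.exp d := Real.exp_pos _
  have key : kk^(d-1) * d ≤ 8^d * max 1 (z^(d-1)) := by
    calc kk^(d-1) * d ≤ (4^(d-1) * (max 1 z)^(d-1)) * d :=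
          mul_le_mul_of_nonneg_right h1 (by exact_mod_cast Nat.zero_le d)
      _ = (4^(d-1) * (d:ℝ)) * max 1 (z^(d-1)) := by rw [hmaxpow]; ring
      _ ≤ (4^d * 2^d) * max 1 (z^(d-1)) := by
          apply mul_le_mul_of_nonneg_right _ hX0
          apply mul_le_mul h4 hd2 (by exact_mod_cast Nat.zero_le d) (by positivity)
      _ = 8^d * max 1 (z^(d-1)) := by rw [h8]
  calc Real.exp d * (kk^(d-1) * d) ≤ Real.exp d * (8^d * max 1 (z^(d-1))) :=
        mul_le_mul_of_nonneg_left key (le_of_lt hE)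
    _ = 8^d * Real.exp d * max 1 (z^(d-1)) := by ring

/-- Restricted second-moment bound for the gradient: for `A ⊆ {-1,1}^n` of relative size `ε`,
`(1/#A) ∑_{x ∈ A} |∇P(x)|² ≤ C^d max{1, (|log ε|/d)^{d-1}}` when `E|P(X)|² = 1`. -/
theorem restricted_gradient_second_moment :
    ∃ C : ℝ, 0 < C ∧
      ∀ (n d : ℕ), 1 ≤ n → 1 ≤ d →
        ∀ P : (Fin n → Bool) → ℝ, IsPolyDeg n d P →
          cubeE n (fun x => (P x) ^ 2) = 1 →
            ∀ A : Finset (Fin n → Bool), A.Nonempty →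
              (∑ x ∈ A, gradSq n P x) / (A.card : ℝ) ≤
                C ^ d *
                  max 1 ((|Real.log ((A.card : ℝ) / 2 ^ n)| / (d : ℝ)) ^ (d - 1)) := by
  refine ⟨8 * Real.exp 1, by positivity, ?_⟩
  intro n d hn hd P hP hnorm A hA
  obtain ⟨a, ha_deg, ha_eq⟩ := hP
  have hPfun : P = fun x => ∑ S : Finset (Fin n), a S * chi n S x := funext fun x => ha_eq x
  -- Parseval
  have hpars : ∑ S : Finset (Fin n), a S ^ 2 = 1 := by
    rw [← parseval n a, ← hnorm, hPfun]
  -- epsilon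
  set ε : ℝ := (A.card : ℝ) / 2 ^ n with hε_def
  have hcardpos : 0 < (A.card : ℝ) := by exact_mod_cast Finset.card_pos.2 hA
  have hε0 : 0 < ε := by positivity
  have hcard_le : (A.card : ℝ) ≤ 2 ^ n := by
    have h1 : A.card ≤ Fintype.card (Fin n → Bool) := Finset.card_le_univ A
    have h2 : Fintype.card (Fin n → Bool) = 2 ^ n := by simp [Fintype.card_fun]
    rw [h2] at h1
    exact_mod_cast h1
  have hε1 : ε ≤ 1 := by
    rw [hε_def, div_le_one (by positivity)]
    exact hcard_le
  set L : ℝ := |Real.log ε| with hL_def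
  have hlog_nonpos : Real.log ε ≤ 0 := Real.log_nonpos (le_of_lt hε0) hε1
  have hL_eq : L = - Real.log ε := abs_of_nonpos hlog_nonpos
  have hL0 : 0 ≤ L := abs_nonneg _
  have hd0 : (0:ℝ) < (d:ℝ) := by exact_mod_cast hd
  -- choice of k
  set k : ℕ := max 1 (Nat.ceil (L / d)) with hk_def
  have hk1 : 1 ≤ k := le_max_left _ _
  have hkpos : 0 < k := hk1
  have hkR : (0:ℝ) < k := by exact_mod_cast hkpos
  have hkL : L / d ≤ (k:ℝ) := by
    apply le_trans (Nat.le_ceil _)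
    exact_mod_cast le_max_right 1 (Nat.ceil (L / d))
  have hLdk : L ≤ (d:ℝ) * k := by
    rw [div_le_iff₀ hd0] at hkL
    linarith [hkL]
  have hkup : (2:ℝ) * k ≤ 4 * max 1 (L / d) := by
    rcases le_or_gt (L / (d:ℝ)) 1 with hle | hgt
    · have hceil : Nat.ceil (L / (d:ℝ)) ≤ 1 := by
        apply Nat.ceil_le.2
        simpa using hle
      have : k = 1 := by
        rw [hk_def]
        omega
      rw [this, max_eq_left hle]
      norm_num
    · have hmax : max 1 (L / (d:ℝ)) = L / d := max_eq_right (le_of_lt hgt)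
      have hceil1 : 1 ≤ Nat.ceil (L / (d:ℝ)) := by
        rw [Nat.one_le_ceil_iff]
        linarith
      have hkceil : k = Nat.ceil (L / (d:ℝ)) := by
        rw [hk_def]
        omega
      have h2 : (Nat.ceil (L / (d:ℝ)) : ℝ) < L / d + 1 := Nat.ceil_lt_add_one (by positivity)
      rw [hmax, hkceil]
      nlinarith [h2, hgt]
  -- derivative coefficients and hypercontractivity
  set c : Fin n → Finset (Fin n) → ℝ :=
    fun i S => if i ∈ S then 0 else a (insert i S) with hc_def
  have hderiv : ∀ i : Fin n, discDeriv n P i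
      = fun x => ∑ S : Finset (Fin n), c i S * chi n S x := by
    intro i
    rw [hPfun]
    exact discDeriv_eq a i
  set w : Fin n → ℝ := fun i => ∑ S : Finset (Fin n), (c i S) ^ 2 with hw_def
  have hw0 : ∀ i, 0 ≤ w i := fun i => Finset.sum_nonneg fun S _ => sq_nonneg _
  have hcdeg : ∀ i : Fin n, ∀ S : Finset (Fin n), d - 1 < S.card → c i S = 0 := by
    intro i S hS
    simp only [hc_def]
    by_cases hiS : i ∈ S
    · rw [if_pos hiS]
    · rw [if_neg hiS]
      apply ha_deg
      rw [Finset.card_insert_of_notMem hiS]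
      omega
  have hhyper : ∀ i : Fin n,
      cubeE n (fun x => (discDeriv n P i x) ^ (2*k))
        ≤ ((2*(k:ℝ))^(d-1) * w i) ^ k := by
    intro i
    rw [hderiv i]
    exact hyper' hk1 (c i) (hcdeg i)
  -- Minkowski over coordinates
  set M : ℝ := (2*(k:ℝ))^(d-1) * d with hM_def
  have hM0 : 0 ≤ M := by positivity
  have hgradk : cubeE n (fun x => (gradSq n P x) ^ k) ≤ M ^ k := by
    have step1 : cubeE n (fun x => (∑ i : Fin n, (discDeriv n P i x)^2) ^ k)
        ≤ (∑ i : Fin n, (2*(k:ℝ))^(d-1) * w i) ^ k := by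
      apply cubeE_finsum_pow hkpos Finset.univ
        (fun i x => (discDeriv n P i x)^2) (fun i => (2*(k:ℝ))^(d-1) * w i)
        (fun i x => sq_nonneg _) (fun i => by positivity)
      intro i _
      have e : (fun x => ((discDeriv n P i x)^2) ^ k) = fun x => (discDeriv n P i x) ^ (2*k) := by
        funext x
        rw [← pow_mul]
      rw [e]
      exact hhyper i
    have e2 : (fun x => (gradSq n P x) ^ k)
        = fun x => (∑ i : Fin n, (discDeriv n P i x)^2) ^ k := by
      funext x
      rfl
    rw [e2]
    apply le_trans step1
    apply pow_le_pow_left₀ (Finset.sum_nonneg fun i _ => by positivity)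
    calc ∑ i : Fin n, (2*(k:ℝ))^(d-1) * w i
        = (2*(k:ℝ))^(d-1) * ∑ i : Fin n, w i := by rw [Finset.mul_sum]
      _ ≤ (2*(k:ℝ))^(d-1) * ((d:ℝ) * 1) := by
          apply mul_le_mul_of_nonneg_left _ (by positivity)
          have := deriv_coeff_sum a ha_deg
          rw [hpars] at this
          simpa [hw_def, hc_def] using this
      _ = M := by rw [hM_def]; ring
  -- indicator function
  set oneA : (Fin n → Bool) → ℝ := fun x => if x ∈ A then 1 else 0 with honeA
  have honeA_nonneg : ∀ x, 0 ≤ oneA x := by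
    intro x
    simp only [honeA]
    by_cases hx : x ∈ A <;> simp [hx]
  have hEoneA : cubeE n oneA = ε := by
    unfold cubeE
    rw [hε_def]
    congr 1
    rw [show (∑ x : Fin n → Bool, oneA x)
        = ∑ x ∈ Finset.univ, (if x ∈ A then (1:ℝ) else 0) from rfl]
    rw [Finset.sum_ite_mem, Finset.univ_inter, Finset.sum_const, nsmul_eq_mul, mul_one]
  -- alpha = eps^{1/k}
  set α : ℝ := ε ^ ((k:ℝ)⁻¹) with hα_def
  have hα0 : 0 ≤ α := Real.rpow_nonneg (le_of_lt hε0) _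
  have hαk : α ^ k = ε := by
    rw [hα_def, ← Real.rpow_natCast (ε ^ ((k:ℝ)⁻¹)) k, ← Real.rpow_mul (le_of_lt hε0)]
    rw [inv_mul_cancel₀ (ne_of_gt hkR), Real.rpow_one]
  -- final Hölder
  have hhold : cubeE n (fun x => oneA x ^ (k-1) * gradSq n P x ^ 1) ≤ α ^ (k-1) * M ^ 1 := by
    apply cubeE_holder hkpos hk1 honeA_nonneg
      (fun x => Finset.sum_nonneg fun i _ => sq_nonneg _) hα0 hM0
    · have e : (fun x => oneA x ^ k) = oneA := by
        funext x
        simp only [honeA]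
        by_cases hx : x ∈ A
        · simp [hx]
        · simp [hx, zero_pow hkpos.ne']
      rw [e, hEoneA, hαk]
    · exact hgradk
  have hgrad_nonneg : ∀ x, 0 ≤ gradSq n P x :=
    fun x => Finset.sum_nonneg fun i _ => sq_nonneg _
  have hmain : cubeE n (fun x => oneA x * gradSq n P x) ≤ α ^ (k-1) * M := by
    have mono : ∀ x, oneA x * gradSq n P x ≤ oneA x ^ (k-1) * gradSq n P x ^ 1 := by
      intro x
      rw [pow_one]
      apply mul_le_mul_of_nonneg_right _ (hgrad_nonneg x)
      simp only [honeA]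
      by_cases hx : x ∈ A
      · simp [hx]
      · simp [hx]
    calc cubeE n (fun x => oneA x * gradSq n P x)
        ≤ cubeE n (fun x => oneA x ^ (k-1) * gradSq n P x ^ 1) := cubeE_mono mono
      _ ≤ α ^ (k-1) * M ^ 1 := hhold
      _ = α ^ (k-1) * M := by rw [pow_one]
  -- rewrite LHS
  have hsum_eq : ∑ x ∈ A, gradSq n P x = 2^n * cubeE n (fun x => oneA x * gradSq n P x) := by
    unfold cubeE
    rw [mul_div_cancel₀ _ (by positivity : ((2:ℝ)^n) ≠ 0)]
    rw [show (∑ x : Fin n → Bool, oneA x * gradSq n P x)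
        = ∑ x ∈ Finset.univ, (if x ∈ A then gradSq n P x else 0) from
      Finset.sum_congr rfl fun x _ => by
        simp only [honeA]
        by_cases hx : x ∈ A <;> simp [hx]]
    rw [Finset.sum_ite_mem, Finset.univ_inter]
  have hLHS : (∑ x ∈ A, gradSq n P x) / (A.card : ℝ)
      = cubeE n (fun x => oneA x * gradSq n P x) / ε := by
    rw [hsum_eq, hε_def]
    field_simp
  rw [hLHS]
  -- quotient bound
  have hquot : α ^ (k-1) / ε ≤ Real.exp d := by
    have hαpow : α ^ (k-1) = Real.exp (Real.log ε * ((k:ℝ)⁻¹ * ((k:ℝ)-1))) := by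
      rw [hα_def, ← Real.rpow_natCast (ε ^ ((k:ℝ)⁻¹)) (k-1), ← Real.rpow_mul (le_of_lt hε0)]
      rw [Real.rpow_def_of_pos hε0]
      congr 2
      rw [Nat.cast_sub hk1]
      norm_num
    have hεexp : ε = Real.exp (Real.log ε) := (Real.exp_log hε0).symm
    rw [hαpow]
    nth_rewrite 2 [hεexp]
    rw [← Real.exp_sub]
    apply Real.exp_le_exp.2
    have he : Real.log ε * ((k:ℝ)⁻¹ * ((k:ℝ)-1)) - Real.log ε
        = (- Real.log ε) / k := by
      field_simp
      ring
    rw [he, ← hL_eq]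
    rw [div_le_iff₀ hkR]
    calc L ≤ (d:ℝ) * k := hLdk
      _ = (d:ℝ) * k := rfl
  calc cubeE n (fun x => oneA x * gradSq n P x) / ε
      ≤ (α ^ (k-1) * M) / ε := (div_le_div_iff_of_pos_right hε0).2 hmain
    _ = (α ^ (k-1) / ε) * M := by ring
    _ ≤ Real.exp d * M := mul_le_mul_of_nonneg_right hquot hM0
    _ ≤ (8 * Real.exp 1) ^ d * max 1 ((L / d) ^ (d-1)) := by
        rw [hM_def]
        exact final_const d hd (L/(d:ℝ)) (by positivity) (2*(k:ℝ)) (by positivity) hkup
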